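/- In the two-class case, both NN-class-specific segregation statistics coincide with Dixon's overall segregation statistic: C_NN(1)(ω) = C_NN(2)(ω) = C(ω) for every outcome ω. -/

import Mathlib

open MeasureTheory Matrix

/-- In the two-class case both NN-class-specific statistics coincide with
Dixon's overall segregation statistic: `C_NN(1)(ω) = C_NN(2)(ω) = C(ω)` for
every outcome `ω`. -/
theorem nn_class_specific_eq_overall_two_class
    {Ω : Type*} [MeasurableSpace Ω] (μ : Measure Ω) [IsProbabilityMeasure μ]
    (N11 N22 : Ω → ℝ) (h11 : MemLp N11 2 μ) (h22 : MemLp N22 2 μ)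
    (n1 n2 : ℝ) :
    let N12 : Ω → ℝ := fun ω => n1 - N11 ω
    let N21 : Ω → ℝ := fun ω => n2 - N22 ω
    let m : (Ω → ℝ) → ℝ := fun X => ∫ ω, X ω ∂μ
    let cov : (Ω → ℝ) → (Ω → ℝ) → ℝ :=
      fun X Y => ∫ ω, (X ω - m X) * (Y ω - m Y) ∂μ
    let S0 : Matrix (Fin 2) (Fin 2) ℝ :=
      !![cov N11 N11, cov N11 N22; cov N11 N22, cov N22 N22]
    let S1 : Matrix (Fin 2) (Fin 2) ℝ :=
      !![cov N11 N11, cov N11 N21; cov N11 N21, cov N21 N21]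
    let S2 : Matrix (Fin 2) (Fin 2) ℝ :=
      !![cov N12 N12, cov N12 N22; cov N12 N22, cov N22 N22]
    let C : Ω → ℝ := fun ω =>
      ![N11 ω - m N11, N22 ω - m N22] ⬝ᵥ
        S0⁻¹.mulVec ![N11 ω - m N11, N22 ω - m N22]
    let CNN1 : Ω → ℝ := fun ω =>
      ![N11 ω - m N11, N21 ω - m N21] ⬝ᵥ
        S1⁻¹.mulVec ![N11 ω - m N11, N21 ω - m N21]
    let CNN2 : Ω → ℝ := fun ω =>
      ![N12 ω - m N12, N22 ω - m N22] ⬝ᵥ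
        S2⁻¹.mulVec ![N12 ω - m N12, N22 ω - m N22]
    IsUnit S0.det → ∀ ω : Ω, CNN1 ω = C ω ∧ CNN2 ω = C ω := by
  intro N12 N21 m cov S0 S1 S2 C CNN1 CNN2 hdet ω
  have i11 : Integrable N11 μ := h11.integrable (by norm_num)
  have i22 : Integrable N22 μ := h22.integrable (by norm_num)
  have hm12 : m N12 = n1 - m N11 := by
    simpa [m, N12] using integral_sub (integrable_const n1) i11
  have hm21 : m N21 = n2 - m N22 := by
    simpa [m, N21] using integral_sub (integrable_const n2) i22
  have e12 : ∀ ω, N12 ω - m N12 = -(N11 ω - m N11) := by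
    intro ω; simp [N12, hm12]
  have e21 : ∀ ω, N21 ω - m N21 = -(N22 ω - m N22) := by
    intro ω; simp [N21, hm21]
  set a := cov N11 N11 with ha
  set b := cov N11 N22 with hb
  set c := cov N22 N22 with hc
  have c1121 : cov N11 N21 = -b := by
    have : (fun ω => (N11 ω - m N11) * (N21 ω - m N21))
        = fun ω => -((N11 ω - m N11) * (N22 ω - m N22)) := by
      funext ω; rw [e21]; ring
    simp only [cov, this, integral_neg]
    rfl
  have c2121 : cov N21 N21 = c := by
    have : (fun ω => (N21 ω - m N21) * (N21 ω - m N21))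
        = fun ω => (N22 ω - m N22) * (N22 ω - m N22) := by
      funext ω; rw [e21]; ring
    simp only [cov, this]
    rfl
  have c1212 : cov N12 N12 = a := by
    have : (fun ω => (N12 ω - m N12) * (N12 ω - m N12))
        = fun ω => (N11 ω - m N11) * (N11 ω - m N11) := by
      funext ω; rw [e12]; ring
    simp only [cov, this]
    rfl
  have c1222 : cov N12 N22 = -b := by
    have : (fun ω => (N12 ω - m N12) * (N22 ω - m N22))
        = fun ω => -((N11 ω - m N11) * (N22 ω - m N22)) := by
      funext ω; rw [e12]; ring
    simp only [cov, this, integral_neg]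
    rfl
  have hS0 : S0 = !![a, b; b, c] := rfl
  have hS1 : S1 = !![a, -b; -b, c] := by
    simp only [S1, c1121, c2121]
    rfl
  have hS2 : S2 = !![a, -b; -b, c] := by
    simp only [S2, c1212, c1222]
    rfl
  have hd0 : S0.det = a * c - b * b := by
    simp [hS0, Matrix.det_fin_two_of]
  have hd1 : (!![a, -b; -b, c] : Matrix (Fin 2) (Fin 2) ℝ).det = a * c - b * b := by
    simp [Matrix.det_fin_two_of]
  have hdet1 : IsUnit (!![a, -b; -b, c] : Matrix (Fin 2) (Fin 2) ℝ).det := by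
    rw [hd1, ← hd0]; exact hdet
  have hne : a * c - b * b ≠ 0 := by
    rw [← hd0]; exact hdet.ne_zero
  have hinv0 : S0⁻¹ = (a * c - b * b)⁻¹ • !![c, -b; -b, a] := by
    rw [Matrix.inv_def, Matrix.adjugate_fin_two, hd0]
    simp [Ring.inverse_eq_inv', hS0]
  have hinv1 : (!![a, -b; -b, c] : Matrix (Fin 2) (Fin 2) ℝ)⁻¹
      = (a * c - b * b)⁻¹ • !![c, b; b, a] := by
    rw [Matrix.inv_def, Matrix.adjugate_fin_two, hd1]
    simp [Ring.inverse_eq_inv']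
  constructor
  · show _ = _
    simp only [CNN1, C, hS1, hinv1, hinv0, e21]
    simp [Matrix.mulVec, dotProduct, Fin.sum_univ_two]
    ring
  · show _ = _
    simp only [CNN2, C, hS2, hinv1, hinv0, e12]
    simp [Matrix.mulVec, dotProduct, Fin.sum_univ_two]
    ring
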